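/- Let 𝒳 be a set and σ : 𝒳 → 𝒳 a confined self-map for which limsup_{k→∞} log(σ_k)/k = 0 (i.e. the growth rate Λ equals 1), and assume the Cesàro mean B := 𝒞(σ_k) exists and is strictly positive. Then there exists a constant C > 0 such that N_σ(X) = (C/Γ(B+1)) · X^B · (1 + O(1/log X)) as the integer X → ∞. -/

import Mathlib

open Filter Topology Real MeasureTheory Asymptotics
open scoped Classical

noncomputable section

/-- `σ` is confined: every iterate has only finitely many fixed points. -/
def Confined {𝒳 : Type*} (σ : 𝒳 → 𝒳) : Prop :=
  ∀ k : ℕ, 1 ≤ k → {x : 𝒳 | σ^[k] x = x}.Finite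

/-- `σ_k`: the number of fixed points of the `k`-th iterate of `σ`. -/
def fixCount {𝒳 : Type*} (σ : 𝒳 → 𝒳) (k : ℕ) : ℕ :=
  Nat.card {x : 𝒳 // σ^[k] x = x}

/-- A prime orbit: a finite set of the form `{x, σ x, …, σ^[ℓ-1] x}` of cardinality
exactly `ℓ ≥ 1`, mapped to itself by `σ`. -/
def IsPrimeOrbit {𝒳 : Type*} (σ : 𝒳 → 𝒳) (P : Set 𝒳) : Prop :=
  ∃ (x : 𝒳) (ℓ : ℕ), 0 < ℓ ∧ P = (fun i => σ^[i] x) '' Set.Iio ℓ ∧ P.ncard = ℓ ∧ σ '' P = P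

/-- The type of prime orbits of `σ`. -/
def PrimeOrbit {𝒳 : Type*} (σ : 𝒳 → 𝒳) := {P : Set 𝒳 // IsPrimeOrbit σ P}

/-- The length `ℓ(P)` of a prime orbit. -/
def orbitLen {𝒳 : Type*} {σ : 𝒳 → 𝒳} (P : PrimeOrbit σ) : ℕ := P.1.ncard

/-- General orbits: elements of the free abelian monoid on the prime orbits,
i.e. finitely supported multisets of prime orbits. -/
abbrev GenOrbit {𝒳 : Type*} (σ : 𝒳 → 𝒳) := PrimeOrbit σ →₀ ℕ

/-- The length of a general orbit: sum of the lengths of its prime components,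
with multiplicity. -/
def genLen {𝒳 : Type*} {σ : 𝒳 → 𝒳} (O : GenOrbit σ) : ℕ :=
  O.sum fun P m => m * orbitLen P

/-- `N_σ(X)`: the number of general orbits of length at most `X`. -/
def Ncount {𝒳 : Type*} (σ : 𝒳 → 𝒳) (X : ℕ) : ℕ :=
  Nat.card {O : GenOrbit σ // genLen O ≤ X}

/-- `P_ℓ`: the number of prime orbits of length `ℓ`. -/
def Pcount {𝒳 : Type*} (σ : 𝒳 → 𝒳) (ℓ : ℕ) : ℕ :=
  Nat.card {P : PrimeOrbit σ // orbitLen P = ℓ}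

/-- The Mertens-type counting function `M_σ(X) = Σ_{1 ≤ ℓ ≤ X} P_ℓ Λ^{-ℓ}`. -/
def Mfun {𝒳 : Type*} (σ : 𝒳 → 𝒳) (Λ : ℝ) (X : ℕ) : ℝ :=
  ∑ ℓ ∈ Finset.Icc 1 X, (Pcount σ ℓ : ℝ) / Λ ^ ℓ

/-- The Cesàro mean of the real sequence `a` (indexed from `1`) equals `B`. -/
def CesaroLim (a : ℕ → ℝ) (B : ℝ) : Prop :=
  Tendsto (fun X : ℕ => (∑ k ∈ Finset.Icc 1 X, a k) / (X : ℝ)) atTop (𝓝 B)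

/-- Extended-real logarithm, sending `0` (and negative numbers) to `-∞`. -/
def elog (x : ℝ) : EReal := if x ≤ 0 then ⊥ else ((Real.log x : ℝ) : EReal)

/-- The sequence `log(σ_k)/k`, with values in the extended reals
(so that `σ_k = 0` contributes `-∞`). -/
def growthSeq {𝒳 : Type*} (σ : 𝒳 → 𝒳) (k : ℕ) : EReal :=
  elog (fixCount σ k) * ((((k : ℝ)⁻¹ : ℝ)) : EReal)

/-- The growth rate of `σ` is the (finite) real number `Λ`, i.e.
`limsup_{k→∞} log(σ_k)/k = log Λ` in the extended reals. -/
def GrowthEq {𝒳 : Type*} (σ : 𝒳 → 𝒳) (Λ : ℝ) : Prop :=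
  Filter.limsup (growthSeq σ) atTop = ((Real.log Λ : ℝ) : EReal)

/-- The probability that a uniformly chosen general orbit of length at most `X`
satisfies the predicate `Q`. -/
def probN {𝒳 : Type*} (σ : 𝒳 → 𝒳) (X : ℕ) (Q : GenOrbit σ → Prop) : ℝ :=
  (Nat.card {O : GenOrbit σ // genLen O ≤ X ∧ Q O} : ℝ) / (Ncount σ X : ℝ)

/-- `ω(O)`: the number of distinct prime orbits dividing the general orbit `O`. -/
def omegaCount {𝒳 : Type*} {σ : 𝒳 → 𝒳} (O : GenOrbit σ) : ℕ := O.support.card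

/-! ### Auxiliary lemmas -/

section Aux
open Finset

namespace OrbitCountAux

/-! #### Elementary power inequalities and telescoping sums -/

lemma pow_sub_pow_le (u v : ℝ) (hu : 0 ≤ u) (huv : u ≤ v) (n : ℕ) :
    v ^ (n+1) - u ^ (n+1) ≤ (n+1 : ℝ) * v ^ n * (v - u) := by
  have h := geom_sum₂_mul v u (n+1)
  rw [← h]
  have hb : ∀ i ∈ range (n+1), v ^ i * u ^ (n - i) ≤ v ^ n := by
    intro i hi
    rw [mem_range] at hi
    calc v ^ i * u ^ (n - i) ≤ v ^ i * v ^ (n - i) := by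
          apply mul_le_mul_of_nonneg_left (pow_le_pow_left₀ hu huv _) (pow_nonneg (hu.trans huv) _)
      _ = v ^ n := by rw [← pow_add]; congr 1; omega
  have hs := Finset.sum_le_sum hb
  simp only [Finset.sum_const, card_range, nsmul_eq_mul] at hs
  have hvu : (0:ℝ) ≤ v - u := by linarith
  calc (∑ i ∈ range (n+1), v ^ i * u ^ (n+1-1-i)) * (v - u)
      ≤ ((n+1 : ℝ) * v ^ n) * (v - u) := by
        apply mul_le_mul_of_nonneg_right _ hvu
        simpa using hs
    _ = (n+1 : ℝ) * v ^ n * (v - u) := by ring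

lemma le_pow_sub_pow (u v : ℝ) (hu : 0 ≤ u) (huv : u ≤ v) (n : ℕ) :
    (n+1 : ℝ) * u ^ n * (v - u) ≤ v ^ (n+1) - u ^ (n+1) := by
  have h := geom_sum₂_mul v u (n+1)
  rw [← h]
  have hb : ∀ i ∈ range (n+1), u ^ n ≤ v ^ i * u ^ (n - i) := by
    intro i hi
    rw [mem_range] at hi
    calc u ^ n = u ^ i * u ^ (n - i) := by rw [← pow_add]; congr 1; omega
      _ ≤ v ^ i * u ^ (n - i) := by
          apply mul_le_mul_of_nonneg_right (pow_le_pow_left₀ hu huv _) (pow_nonneg hu _)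
  have hs := Finset.sum_le_sum hb
  simp only [Finset.sum_const, card_range, nsmul_eq_mul] at hs
  have hvu : (0:ℝ) ≤ v - u := by linarith
  calc (n+1 : ℝ) * u ^ n * (v - u) = ((n+1:ℝ) * u ^ n) * (v - u) := by ring
    _ ≤ (∑ i ∈ range (n+1), v ^ i * u ^ (n+1-1-i)) * (v - u) := by
        apply mul_le_mul_of_nonneg_right _ hvu
        simpa using hs

lemma sum_pow_lower (X ℓ : ℕ) (hℓ : 1 ≤ ℓ) (n : ℕ) :
    (X:ℝ) ^ (n+1) ≤ ((n:ℝ)+1) * ℓ * ∑ j ∈ range (X/ℓ + 1), ((X - j*ℓ : ℕ) : ℝ) ^ n := by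
  set J := X / ℓ with hJ
  have key : ∀ j ∈ range (J+1),
      ((X - j*ℓ : ℕ):ℝ)^(n+1) - ((X - (j+1)*ℓ : ℕ):ℝ)^(n+1) ≤ ((n:ℝ)+1) * ℓ * ((X - j*ℓ : ℕ):ℝ)^n := by
    intro j _
    have he : (j+1)*ℓ = j*ℓ + ℓ := by ring
    have h1 : (X - (j+1)*ℓ : ℕ) ≤ (X - j*ℓ : ℕ) := by omega
    have h2 : (X - j*ℓ : ℕ) - (X - (j+1)*ℓ : ℕ) ≤ ℓ := by omega
    have h0 := pow_sub_pow_le ((X - (j+1)*ℓ : ℕ):ℝ) ((X - j*ℓ : ℕ):ℝ) (by positivity) (by exact_mod_cast h1) n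
    have h3 : ((X - j*ℓ : ℕ):ℝ) - ((X - (j+1)*ℓ : ℕ):ℝ) ≤ (ℓ:ℝ) := by
      rw [← Nat.cast_sub h1]; exact_mod_cast h2
    have h4 : ((n:ℝ)+1) * ((X - j*ℓ:ℕ):ℝ)^n * (((X - j*ℓ:ℕ):ℝ) - ((X - (j+1)*ℓ:ℕ):ℝ)) ≤ ((n:ℝ)+1) * ((X - j*ℓ:ℕ):ℝ)^n * ℓ := by
      apply mul_le_mul_of_nonneg_left h3 (by positivity)
    calc ((X - j*ℓ : ℕ):ℝ)^(n+1) - ((X - (j+1)*ℓ : ℕ):ℝ)^(n+1)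
        ≤ ((n:ℝ)+1) * ((X - j*ℓ:ℕ):ℝ)^n * (((X - j*ℓ:ℕ):ℝ) - ((X - (j+1)*ℓ:ℕ):ℝ)) := by exact_mod_cast h0
      _ ≤ ((n:ℝ)+1) * ((X - j*ℓ:ℕ):ℝ)^n * ℓ := h4
      _ = ((n:ℝ)+1) * ℓ * ((X - j*ℓ:ℕ):ℝ)^n := by ring
  have tele := Finset.sum_range_sub' (fun j => ((X - j*ℓ : ℕ):ℝ)^(n+1)) (J+1)
  have hsum := Finset.sum_le_sum key
  rw [tele] at hsum
  have hend : (X - (J+1)*ℓ : ℕ) = 0 := by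
    have h7 : X < (J+1) * ℓ := by
      exact (Nat.div_lt_iff_lt_mul (by omega)).mp (by omega)
    omega
  rw [hend] at hsum
  simp only [Nat.cast_zero, zero_pow (Nat.succ_ne_zero n), Nat.zero_mul, Nat.sub_zero, zero_mul] at hsum
  calc (X:ℝ)^(n+1) = ((X - 0*ℓ : ℕ):ℝ)^(n+1) - 0 := by norm_num
    _ ≤ ∑ j ∈ range (J+1), ((n:ℝ)+1) * ℓ * ((X - j*ℓ:ℕ):ℝ)^n := by
        simpa using hsum
    _ = ((n:ℝ)+1) * ℓ * ∑ j ∈ range (J+1), ((X - j*ℓ:ℕ):ℝ)^n := by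
        rw [← Finset.mul_sum]

lemma sum_pow_upper (X ℓ S : ℕ) (hℓ : 1 ≤ ℓ) (n : ℕ) :
    ((n:ℝ)+1) * ℓ * ∑ j ∈ range (X/ℓ + 1), (((X - j*ℓ : ℕ) : ℝ) + S) ^ n
      ≤ ((X:ℝ) + S + ℓ) ^ (n+1) := by
  set J := X / ℓ with hJ
  -- real telescope g j = X + S + ℓ - j*ℓ
  set g : ℕ → ℝ := fun j => (X:ℝ) + S + ℓ - j*ℓ with hg
  have hgnonneg : ∀ j ∈ range (J+2), 0 ≤ g j := by
    intro j hj
    rw [mem_range] at hj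
    have : j ≤ J + 1 := by omega
    have h1 : (j:ℝ) * ℓ ≤ ((J:ℝ)+1) * ℓ := by
      apply mul_le_mul_of_nonneg_right _ (by positivity)
      exact_mod_cast this
    have h2 : (J:ℝ) * ℓ ≤ X := by
      have := Nat.div_mul_le_self X ℓ
      exact_mod_cast this
    simp only [hg]
    nlinarith [Nat.cast_nonneg (α := ℝ) S]
  have key : ∀ j ∈ range (J+1),
      ((n:ℝ)+1) * ℓ * (((X - j*ℓ : ℕ):ℝ) + S) ^ n ≤ g j ^ (n+1) - g (j+1) ^ (n+1) := by
    intro j hj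
    rw [mem_range] at hj
    have hjl : j * ℓ ≤ X := by
      have : j ≤ J := by omega
      calc j * ℓ ≤ J * ℓ := Nat.mul_le_mul_right _ this
        _ ≤ X := by rw [hJ]; exact Nat.div_mul_le_self X ℓ
    have hcast : ((X - j*ℓ : ℕ):ℝ) = (X:ℝ) - j*ℓ := by
      rw [Nat.cast_sub hjl]; push_cast; ring
    have hval : ((X - j*ℓ : ℕ):ℝ) + S = g (j+1) := by
      rw [hcast]; simp only [hg]; push_cast; ring
    have hdiff : g j - g (j+1) = ℓ := by simp only [hg]; push_cast; ring
    have hu : 0 ≤ g (j+1) := hgnonneg (j+1) (by rw [mem_range]; omega)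
    have huv : g (j+1) ≤ g j := by
      simp only [hg]; push_cast; nlinarith [Nat.cast_nonneg (α := ℝ) ℓ, hℓ]
    have h0 := le_pow_sub_pow (g (j+1)) (g j) hu huv n
    rw [hdiff] at h0
    rw [hval]
    calc ((n:ℝ)+1) * ℓ * g (j+1) ^ n = ((n:ℝ)+1) * g (j+1) ^ n * ℓ := by ring
      _ ≤ g j ^ (n+1) - g (j+1) ^ (n+1) := h0
  have tele := Finset.sum_range_sub' (fun j => g j ^ (n+1)) (J+1)
  have hsum := Finset.sum_le_sum key
  rw [tele] at hsum
  rw [← Finset.mul_sum] at hsum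
  have hg0 : g 0 = (X:ℝ) + S + ℓ := by simp [hg]
  have hglast : 0 ≤ g (J+1) ^ (n+1) := by
    apply pow_nonneg
    exact hgnonneg (J+1) (by rw [mem_range]; omega)
  calc ((n:ℝ)+1) * ℓ * ∑ j ∈ range (J+1), (((X - j*ℓ : ℕ):ℝ) + S) ^ n
      ≤ g 0 ^ (n+1) - g (J+1) ^ (n+1) := hsum
    _ ≤ ((X:ℝ) + S + ℓ) ^ (n+1) := by rw [hg0]; linarith

lemma countFinite (r : ℕ) (w : Fin r → ℕ) (hw : ∀ i, 1 ≤ w i) (X : ℕ) :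
    Finite {m : Fin r → ℕ // ∑ i, m i * w i ≤ X} := by
  apply Finite.of_injective (β := Fin r → Fin (X+1))
    (fun m => fun i => ⟨m.1 i, by
      have h1 : m.1 i * 1 ≤ m.1 i * w i := Nat.mul_le_mul_left _ (hw i)
      have h2 : m.1 i * w i ≤ ∑ j, m.1 j * w j :=
        Finset.single_le_sum (f := fun j => m.1 j * w j) (fun j _ => Nat.zero_le _) (Finset.mem_univ i)
      have := m.2
      omega⟩)
  intro m m' h
  apply Subtype.ext
  funext i
  have := congrFun h i
  simpa [Fin.ext_iff] using this

lemma countCard_succ (r : ℕ) (w : Fin (r+1) → ℕ) (hw : ∀ i, 1 ≤ w i) (X : ℕ) :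
    Nat.card {m : Fin (r+1) → ℕ // ∑ i, m i * w i ≤ X}
      = ∑ j ∈ range (X / w 0 + 1),
          Nat.card {m : Fin r → ℕ // ∑ i, m i * w i.succ ≤ X - j * w 0} := by
  have e : {m : Fin (r+1) → ℕ // ∑ i, m i * w i ≤ X}
      ≃ Σ j : Fin (X / w 0 + 1), {m : Fin r → ℕ // ∑ i, m i * w i.succ ≤ X - (j:ℕ) * w 0} := by
    refine
      { toFun := fun m => ⟨⟨m.1 0, ?_⟩, ⟨Fin.tail m.1, ?_⟩⟩
        invFun := fun p => ⟨Fin.cons (p.1 : ℕ) p.2.1, ?_⟩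
        left_inv := ?_
        right_inv := ?_ }
    · have h2 : m.1 0 * w 0 ≤ X := by
        have := m.2
        have h2 : m.1 0 * w 0 ≤ ∑ i, m.1 i * w i :=
          Finset.single_le_sum (f := fun i => m.1 i * w i) (fun j _ => Nat.zero_le _) (Finset.mem_univ 0)
        omega
      have : m.1 0 ≤ X / w 0 := Nat.le_div_iff_mul_le (hw 0) |>.mpr h2
      omega
    · have hm := m.2
      rw [Fin.sum_univ_succ] at hm
      simp only [Fin.tail]
      omega
    · -- sum for cons
      rcases p with ⟨j, m, hm⟩
      rw [Fin.sum_univ_succ]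
      simp only [Fin.cons_zero, Fin.cons_succ]
      have hj : (j:ℕ) * w 0 ≤ X := by
        have hj1 : (j:ℕ) ≤ X / w 0 := by omega
        calc (j:ℕ) * w 0 ≤ (X / w 0) * w 0 := Nat.mul_le_mul_right _ hj1
          _ ≤ X := Nat.div_mul_le_self _ _
      omega
    · intro m
      apply Subtype.ext
      exact Fin.cons_self_tail m.1
    · intro p
      rcases p with ⟨j, m, hm⟩
      refine Sigma.ext ?_ ?_
      · simp [Fin.ext_iff]
      · simp only
        have h1 : Fin.cons (α := fun _ : Fin (r+1) => ℕ) (j:ℕ) m 0 = (j:ℕ) := rfl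
        rw [Subtype.heq_iff_coe_eq]
        · simp [Fin.tail_cons]
        · intro x
          simp [Fin.cons_zero]
  rw [Nat.card_congr e]
  have : ∀ j : Fin (X / w 0 + 1), Finite {m : Fin r → ℕ // ∑ i, m i * w i.succ ≤ X - (j:ℕ) * w 0} :=
    fun j => countFinite r (fun i => w i.succ) (fun i => hw i.succ) _
  have := fun j : Fin (X / w 0 + 1) =>
    @Fintype.ofFinite _ (this j)
  rw [Nat.card_eq_fintype_card, Fintype.card_sigma]
  rw [← Fin.sum_univ_eq_sum_range (fun j => Nat.card {m : Fin r → ℕ // ∑ i, m i * w i.succ ≤ X - j * w 0})]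
  congr 1
  funext j
  rw [Nat.card_eq_fintype_card]

lemma count_bounds (r : ℕ) (w : Fin r → ℕ) (hw : ∀ i, 1 ≤ w i) (X : ℕ) :
    (X:ℝ)^r ≤ (Nat.card {m : Fin r → ℕ // ∑ i, m i * w i ≤ X} : ℝ)
        * (Nat.factorial r : ℝ) * ∏ i, (w i : ℝ) ∧
    (Nat.card {m : Fin r → ℕ // ∑ i, m i * w i ≤ X} : ℝ)
        * (Nat.factorial r : ℝ) * ∏ i, (w i : ℝ) ≤ ((X:ℝ) + ∑ i, (w i : ℝ))^r := by
  induction r generalizing X with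
  | zero =>
      have h1 : Nat.card {m : Fin 0 → ℕ // ∑ i, m i * w i ≤ X} = 1 := by
        haveI : Nonempty {m : Fin 0 → ℕ // ∑ i, m i * w i ≤ X} :=
          ⟨⟨fun i => i.elim0, by simp⟩⟩
        haveI : Subsingleton (Fin 0 → ℕ) := ⟨fun a b => funext fun i => i.elim0⟩
        exact Nat.card_unique
      rw [h1]
      simp
  | succ r ih =>
      have hrec := countCard_succ r w hw X
      set ℓ := w 0 with hℓdef
      have hℓ : 1 ≤ ℓ := hw 0
      set W' : ℝ := ∏ i : Fin r, (w i.succ : ℝ) with hW'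
      set S' : ℝ := ∑ i : Fin r, (w i.succ : ℝ) with hS'
      have hW'pos : 0 < W' := by
        rw [hW']; apply Finset.prod_pos; intro i _;
        exact_mod_cast hw i.succ
      have hS'nonneg : 0 ≤ S' := by
        rw [hS']; apply Finset.sum_nonneg; intro i _; positivity
      have hprod : (∏ i : Fin (r+1), (w i : ℝ)) = ℓ * W' := by
        rw [Fin.prod_univ_succ]
      have hsumw : (∑ i : Fin (r+1), (w i : ℝ)) = ℓ + S' := by
        rw [Fin.sum_univ_succ]
      have hfact : (Nat.factorial (r+1) : ℝ) = ((r:ℝ)+1) * (Nat.factorial r : ℝ) := by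
        rw [Nat.factorial_succ]; push_cast; ring
      -- abbreviation for inner counts
      set N : ℕ → ℕ := fun Y => Nat.card {m : Fin r → ℕ // ∑ i, m i * w i.succ ≤ Y} with hN
      have hcard : (Nat.card {m : Fin (r+1) → ℕ // ∑ i, m i * w i ≤ X} : ℝ)
          = ∑ j ∈ range (X/ℓ + 1), (N (X - j*ℓ) : ℝ) := by
        rw [hrec]; push_cast; rfl
      have ihl : ∀ Y : ℕ, (Y:ℝ)^r ≤ (N Y : ℝ) * (Nat.factorial r : ℝ) * W' :=
        fun Y => (ih (fun i => w i.succ) (fun i => hw i.succ) Y).1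
      have ihu : ∀ Y : ℕ, (N Y : ℝ) * (Nat.factorial r : ℝ) * W' ≤ ((Y:ℝ) + S')^r :=
        fun Y => (ih (fun i => w i.succ) (fun i => hw i.succ) Y).2
      constructor
      · calc (X:ℝ)^(r+1)
            ≤ ((r:ℝ)+1) * ℓ * ∑ j ∈ range (X/ℓ + 1), ((X - j*ℓ : ℕ):ℝ)^r :=
              sum_pow_lower X ℓ hℓ r
          _ ≤ ((r:ℝ)+1) * ℓ * ∑ j ∈ range (X/ℓ + 1), (N (X - j*ℓ) : ℝ) * (Nat.factorial r : ℝ) * W' := by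
              apply mul_le_mul_of_nonneg_left (Finset.sum_le_sum fun j _ => ihl _) (by positivity)
          _ = (∑ j ∈ range (X/ℓ + 1), (N (X - j*ℓ) : ℝ)) * (Nat.factorial (r+1) : ℝ) * (ℓ * W') := by
              rw [hfact]
              simp only [Finset.sum_mul, Finset.mul_sum]
              exact Finset.sum_congr rfl fun j _ => by ring
          _ = (Nat.card {m : Fin (r+1) → ℕ // ∑ i, m i * w i ≤ X} : ℝ)
                * (Nat.factorial (r+1) : ℝ) * ∏ i, (w i : ℝ) := by
              rw [hcard, hprod]
      · calc (Nat.card {m : Fin (r+1) → ℕ // ∑ i, m i * w i ≤ X} : ℝ)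
                * (Nat.factorial (r+1) : ℝ) * ∏ i, (w i : ℝ)
            = ((r:ℝ)+1) * ℓ * ∑ j ∈ range (X/ℓ + 1), ((N (X - j*ℓ) : ℝ) * (Nat.factorial r : ℝ) * W') := by
              rw [hcard, hprod, hfact]
              simp only [Finset.sum_mul, Finset.mul_sum]
              exact Finset.sum_congr rfl fun j _ => by ring
          _ ≤ ((r:ℝ)+1) * ℓ * ∑ j ∈ range (X/ℓ + 1), (((X - j*ℓ : ℕ):ℝ) + S')^r := by
              apply mul_le_mul_of_nonneg_left (Finset.sum_le_sum fun j _ => ihu _) (by positivity)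
          _ ≤ ((X:ℝ) + ∑ i, (w i : ℝ))^(r+1) := by
              rw [hsumw]
              have h := sum_pow_upper X ℓ (∑ i : Fin r, w i.succ) hℓ r
              have hcs : ((∑ i : Fin r, w i.succ : ℕ) : ℝ) = S' := by
                rw [hS']; push_cast; rfl
              rw [hcs] at h
              calc ((r:ℝ)+1) * ℓ * ∑ j ∈ range (X/ℓ + 1), (((X - j*ℓ : ℕ):ℝ) + S')^r
                  ≤ ((X:ℝ) + S' + ℓ)^(r+1) := h
                _ = ((X:ℝ) + (ℓ + S'))^(r+1) := by ring

variable {𝒳 : Type*} {σ : 𝒳 → 𝒳}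

lemma ncard_Iio (d : ℕ) : (Set.Iio d).ncard = d := by
  rw [← Finset.coe_Iio, Set.ncard_coe_finset, Nat.card_Iio]

lemma iterate_mod {x : 𝒳} {d : ℕ} (hd : 0 < d) (hx : σ^[d] x = x) (n : ℕ) :
    σ^[n] x = σ^[n % d] x := by
  conv_lhs => rw [← Nat.mod_add_div n d]
  rw [Function.iterate_add_apply]
  congr 1
  rw [Function.iterate_mul]
  exact Function.iterate_fixed hx _

lemma minimal_orbit_ncard {x : 𝒳} {ℓ : ℕ} (hpos : 0 < ℓ) (hfix : σ^[ℓ] x = x)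
    (hmin : ∀ m, 0 < m → m < ℓ → σ^[m] x ≠ x) :
    ((fun i => σ^[i] x) '' Set.Iio ℓ).ncard = ℓ := by
  have key : ∀ i j : ℕ, i < j → j < ℓ → σ^[i] x = σ^[j] x → False := by
    intro i j h hj hij
    have h1 : σ^[ℓ - j + i] x = σ^[ℓ - j] (σ^[i] x) := Function.iterate_add_apply σ _ _ x
    have h2 : σ^[ℓ - j] (σ^[j] x) = x := by
      rw [← Function.iterate_add_apply]
      have he : ℓ - j + j = ℓ := by omega
      rw [he, hfix]
    have h3 : σ^[ℓ - j + i] x = x := by rw [h1, hij, h2]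
    exact hmin (ℓ - j + i) (by omega) (by omega) h3
  have hinj : Set.InjOn (fun i => σ^[i] x) (Set.Iio ℓ) := by
    intro i hi j hj hij
    simp only [Set.mem_Iio] at hi hj
    have hij' : σ^[i] x = σ^[j] x := hij
    rcases lt_trichotomy i j with h | h | h
    · exact absurd (key i j h hj hij') (fun f => f)
    · exact h
    · exact absurd (key j i h hi hij'.symm) (fun f => f)
  rw [Set.ncard_image_of_injOn hinj, ncard_Iio]

/-- the orbit of a point with minimal period ℓ is a prime orbit -/
lemma isPrimeOrbit_of_minimal {x : 𝒳} {ℓ : ℕ} (hpos : 0 < ℓ) (hfix : σ^[ℓ] x = x)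
    (hmin : ∀ m, 0 < m → m < ℓ → σ^[m] x ≠ x) :
    IsPrimeOrbit σ ((fun i => σ^[i] x) '' Set.Iio ℓ) := by
  set P := (fun i => σ^[i] x) '' Set.Iio ℓ with hP
  have key : ∀ i j : ℕ, i < j → j < ℓ → σ^[i] x = σ^[j] x → False := by
    intro i j h hj hij
    have h1 : σ^[ℓ - j + i] x = σ^[ℓ - j] (σ^[i] x) := Function.iterate_add_apply σ _ _ x
    have h2 : σ^[ℓ - j] (σ^[j] x) = x := by
      rw [← Function.iterate_add_apply]
      have he : ℓ - j + j = ℓ := by omega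
      rw [he, hfix]
    have h3 : σ^[ℓ - j + i] x = x := by rw [h1, hij, h2]
    exact hmin (ℓ - j + i) (by omega) (by omega) h3
  have hinj : Set.InjOn (fun i => σ^[i] x) (Set.Iio ℓ) := by
    intro i hi j hj hij
    simp only [Set.mem_Iio] at hi hj
    have hij' : σ^[i] x = σ^[j] x := hij
    rcases lt_trichotomy i j with h | h | h
    · exact absurd (key i j h hj hij') (fun f => f)
    · exact h
    · exact absurd (key j i h hi hij'.symm) (fun f => f)
  have hcard : P.ncard = ℓ := minimal_orbit_ncard hpos hfix hmin
  refine ⟨x, ℓ, hpos, rfl, hcard, ?_⟩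
  ext y
  constructor
  · rintro ⟨z, ⟨i, hi, rfl⟩, rfl⟩
    simp only [Set.mem_Iio] at hi
    refine ⟨(i+1) % ℓ, Set.mem_Iio.mpr (Nat.mod_lt _ hpos), ?_⟩
    show σ^[(i+1) % ℓ] x = σ (σ^[i] x)
    rw [← iterate_mod hpos hfix (i+1)]
    exact Function.iterate_succ_apply' σ i x
  · rintro ⟨i, hi, rfl⟩
    simp only [Set.mem_Iio] at hi
    rcases Nat.eq_zero_or_pos i with h0 | h0
    · refine ⟨σ^[ℓ - 1] x, ⟨ℓ - 1, Set.mem_Iio.mpr (by omega), rfl⟩, ?_⟩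
      show σ (σ^[ℓ-1] x) = σ^[i] x
      subst h0
      rw [← Function.iterate_succ_apply' σ (ℓ-1) x]
      have he : ℓ - 1 + 1 = ℓ := by omega
      rw [Nat.succ_eq_add_one, he, hfix]
      simp
    · refine ⟨σ^[i - 1] x, ⟨i - 1, Set.mem_Iio.mpr (by omega), rfl⟩, ?_⟩
      show σ (σ^[i-1] x) = σ^[i] x
      rw [← Function.iterate_succ_apply' σ (i-1) x]
      congr 1
      omega

/-- structure of a prime orbit: data and basic facts -/
lemma primeOrbit_spec (P : PrimeOrbit σ) :
    ∃ x : 𝒳, P.1 = (fun i => σ^[i] x) '' Set.Iio (orbitLen P) ∧ 0 < orbitLen P ∧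
      σ^[orbitLen P] x = x := by
  obtain ⟨x, ℓ, hpos, hPeq, hcard, hσP⟩ := P.2
  have hlen : orbitLen P = ℓ := hcard
  refine ⟨x, by rw [hlen, hPeq], by omega, ?_⟩
  rw [hlen]
  have hxP : x ∈ P.1 := by
    rw [hPeq]; exact ⟨0, Set.mem_Iio.mpr hpos, by simp⟩
  have hx2 : x ∈ σ '' P.1 := by rw [hσP]; exact hxP
  obtain ⟨y, hyP, hyx⟩ := hx2
  rw [hPeq] at hyP
  obtain ⟨i, hi, rfl⟩ := hyP
  simp only [Set.mem_Iio] at hi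
  have hd : σ^[i+1] x = x := by
    rw [Function.iterate_succ_apply' σ i x]; exact hyx
  set d := i + 1 with hddef
  have hdpos : 0 < d := by omega
  rcases Nat.lt_or_ge d ℓ with hlt | hge
  · exfalso
    have hsub : P.1 ⊆ (fun i => σ^[i] x) '' Set.Iio d := by
      rw [hPeq]
      rintro z ⟨j, hj, rfl⟩
      exact ⟨j % d, Set.mem_Iio.mpr (Nat.mod_lt _ hdpos), (iterate_mod hdpos hd j).symm⟩
    have h1 : P.1.ncard ≤ ((fun i => σ^[i] x) '' Set.Iio d).ncard :=
      Set.ncard_le_ncard hsub ((Set.finite_Iio d).image _)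
    have h2 : ((fun i => σ^[i] x) '' Set.Iio d).ncard ≤ (Set.Iio d).ncard :=
      Set.ncard_image_le (Set.finite_Iio d)
    have h3 : (Set.Iio d).ncard = d := ncard_Iio d
    omega
  · have hde : d = ℓ := by omega
    rw [← hde]; exact hd

lemma primeOrbit_finite (P : PrimeOrbit σ) : P.1.Finite := by
  obtain ⟨x, hPeq, hpos, hfix⟩ := primeOrbit_spec P
  rw [hPeq]
  exact (Set.finite_Iio _).image _

lemma primeOrbit_fix_len (P : PrimeOrbit σ) {y : 𝒳} (hy : y ∈ P.1) :
    σ^[orbitLen P] y = y := by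
  obtain ⟨x, hPeq, hpos, hfix⟩ := primeOrbit_spec P
  rw [hPeq] at hy
  obtain ⟨i, hi, rfl⟩ := hy
  show σ^[orbitLen P] (σ^[i] x) = σ^[i] x
  rw [← Function.iterate_add_apply, Nat.add_comm, Function.iterate_add_apply, hfix]

lemma primeOrbit_fix_dvd (P : PrimeOrbit σ) {y : 𝒳} (hy : y ∈ P.1) {k : ℕ}
    (hk : orbitLen P ∣ k) : σ^[k] y = y := by
  obtain ⟨c, rfl⟩ := hk
  rw [Function.iterate_mul]
  exact Function.iterate_fixed (primeOrbit_fix_len P hy) c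

lemma primeOrbit_eq_range (P : PrimeOrbit σ) {y : 𝒳} (hy : y ∈ P.1) :
    P.1 = Set.range (fun n => σ^[n] y) := by
  obtain ⟨x, hPeq, hpos, hfix⟩ := primeOrbit_spec P
  set ℓ := orbitLen P with hℓ
  rw [hPeq] at hy
  obtain ⟨j, hj, rfl⟩ := hy
  simp only [Set.mem_Iio] at hj
  ext z
  constructor
  · rw [hPeq]
    rintro ⟨k, hk, rfl⟩
    simp only [Set.mem_Iio] at hk
    refine ⟨k + (ℓ - j), ?_⟩
    show σ^[k + (ℓ - j)] (σ^[j] x) = σ^[k] x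
    rw [← Function.iterate_add_apply]
    have he : k + (ℓ - j) + j = k + ℓ := by omega
    rw [he, Function.iterate_add_apply, hfix]
  · rintro ⟨n, rfl⟩
    show σ^[n] (σ^[j] x) ∈ P.1
    rw [← Function.iterate_add_apply, iterate_mod (by omega : 0 < ℓ) hfix (n+j), hPeq]
    exact ⟨(n+j) % ℓ, Set.mem_Iio.mpr (Nat.mod_lt _ (by omega)), rfl⟩

lemma primeOrbit_eq_of_mem {P Q : PrimeOrbit σ} {y : 𝒳} (hyP : y ∈ P.1) (hyQ : y ∈ Q.1) :
    P = Q := by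
  apply Subtype.ext
  rw [primeOrbit_eq_range P hyP, primeOrbit_eq_range Q hyQ]

/-- every periodic point lies on a prime orbit whose length divides the period -/
lemma exists_primeOrbit {x : 𝒳} {k : ℕ} (hk : 0 < k) (hx : σ^[k] x = x) :
    ∃ P : PrimeOrbit σ, x ∈ P.1 ∧ orbitLen P ∣ k := by
  have hex : ∃ m, 0 < m ∧ σ^[m] x = x := ⟨k, hk, hx⟩
  classical
  set ℓ := Nat.find hex with hℓdef
  obtain ⟨hℓpos, hℓfix⟩ := Nat.find_spec hex
  have hmin : ∀ m, 0 < m → m < ℓ → σ^[m] x ≠ x := by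
    intro m hm hmℓ hfx
    exact Nat.find_min hex hmℓ ⟨hm, hfx⟩
  have hPO := isPrimeOrbit_of_minimal hℓpos hℓfix hmin
  refine ⟨⟨_, hPO⟩, ⟨0, Set.mem_Iio.mpr hℓpos, rfl⟩, ?_⟩
  have hlen : orbitLen ⟨_, hPO⟩ = ℓ := minimal_orbit_ncard hℓpos hℓfix hmin
  rw [hlen]
  -- ℓ ∣ k
  have hmod : σ^[k % ℓ] x = x := by
    conv_rhs => rw [← hx]
    exact (iterate_mod hℓpos hℓfix k).symm
  by_contra hndvd
  have h1 : 0 < k % ℓ := by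
    rcases Nat.eq_zero_or_pos (k % ℓ) with h | h
    · exact absurd (Nat.dvd_of_mod_eq_zero h) hndvd
    · exact h
  exact hmin _ h1 (Nat.mod_lt _ hℓpos) hmod


lemma fixCount_eq_card (hσ : Confined σ) {k : ℕ} (hk : 1 ≤ k) :
    fixCount σ k = (hσ k hk).toFinset.card := by
  rw [fixCount, ← Set.ncard_eq_toFinset_card _ (hσ k hk)]
  exact Nat.card_coe_set_eq _

lemma sum_orbitLen_le_fixCount (hσ : Confined σ) {k : ℕ} (hk : 1 ≤ k)
    (T : Finset (PrimeOrbit σ)) :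
    ∑ P ∈ T.filter (fun P => orbitLen P ∣ k), orbitLen P ≤ fixCount σ k := by
  classical
  set T' := T.filter (fun P => orbitLen P ∣ k) with hT'
  have hdisj : ∀ P ∈ T', ∀ Q ∈ T', P ≠ Q →
      Disjoint (primeOrbit_finite P).toFinset (primeOrbit_finite Q).toFinset := by
    intro P _ Q _ hPQ
    rw [Finset.disjoint_left]
    intro y hyP hyQ
    rw [Set.Finite.mem_toFinset] at hyP hyQ
    exact hPQ (primeOrbit_eq_of_mem hyP hyQ)
  have hsub : T'.biUnion (fun P => (primeOrbit_finite P).toFinset) ⊆ (hσ k hk).toFinset := by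
    intro y hy
    rw [Finset.mem_biUnion] at hy
    obtain ⟨P, hP, hy⟩ := hy
    rw [Set.Finite.mem_toFinset] at hy ⊢
    rw [hT', Finset.mem_filter] at hP
    exact primeOrbit_fix_dvd P hy hP.2
  calc ∑ P ∈ T', orbitLen P
      = ∑ P ∈ T', (primeOrbit_finite P).toFinset.card := by
        apply Finset.sum_congr rfl
        intro P _
        rw [← Set.ncard_eq_toFinset_card _ (primeOrbit_finite P)]
        rfl
    _ = (T'.biUnion fun P => (primeOrbit_finite P).toFinset).card :=
        (Finset.card_biUnion hdisj).symm
    _ ≤ (hσ k hk).toFinset.card := Finset.card_le_card hsub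
    _ = fixCount σ k := (fixCount_eq_card hσ hk).symm

lemma fixCount_eq_sum [Fintype (PrimeOrbit σ)] (hσ : Confined σ) {k : ℕ} (hk : 1 ≤ k) :
    fixCount σ k = ∑ P ∈ Finset.univ.filter (fun P : PrimeOrbit σ => orbitLen P ∣ k), orbitLen P := by
  classical
  set T' := Finset.univ.filter (fun P : PrimeOrbit σ => orbitLen P ∣ k) with hT'
  have hdisj : ∀ P ∈ T', ∀ Q ∈ T', P ≠ Q →
      Disjoint (primeOrbit_finite P).toFinset (primeOrbit_finite Q).toFinset := by
    intro P _ Q _ hPQ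
    rw [Finset.disjoint_left]
    intro y hyP hyQ
    rw [Set.Finite.mem_toFinset] at hyP hyQ
    exact hPQ (primeOrbit_eq_of_mem hyP hyQ)
  have heq : (hσ k hk).toFinset = T'.biUnion (fun P => (primeOrbit_finite P).toFinset) := by
    ext y
    rw [Set.Finite.mem_toFinset, Finset.mem_biUnion]
    constructor
    · intro hy
      obtain ⟨P, hyP, hdvd⟩ := exists_primeOrbit (by omega : 0 < k) hy
      exact ⟨P, by rw [hT', Finset.mem_filter]; exact ⟨Finset.mem_univ _, hdvd⟩,
        (Set.Finite.mem_toFinset _).mpr hyP⟩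
    · rintro ⟨P, hP, hy⟩
      rw [Set.Finite.mem_toFinset] at hy
      rw [hT', Finset.mem_filter] at hP
      exact primeOrbit_fix_dvd P hy hP.2
  rw [fixCount_eq_card hσ hk, heq, Finset.card_biUnion hdisj]
  apply Finset.sum_congr rfl
  intro P _
  rw [← Set.ncard_eq_toFinset_card _ (primeOrbit_finite P)]
  rfl

lemma sum_sum_orbitLen (T : Finset (PrimeOrbit σ)) (X : ℕ) :
    ∑ k ∈ Finset.Icc 1 X, ∑ P ∈ T.filter (fun P => orbitLen P ∣ k), orbitLen P
      = ∑ P ∈ T, orbitLen P * (X / orbitLen P) := by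
  classical
  have h1 : ∀ k, ∑ P ∈ T.filter (fun P => orbitLen P ∣ k), orbitLen P
      = ∑ P ∈ T, if orbitLen P ∣ k then orbitLen P else 0 :=
    fun k => Finset.sum_filter _ _
  simp_rw [h1]
  rw [Finset.sum_comm]
  apply Finset.sum_congr rfl
  intro P _
  rw [← Finset.sum_filter]
  rw [Finset.sum_const, smul_eq_mul]
  rw [Nat.mul_comm]
  congr 1
  have : Finset.Icc 1 X = Finset.Ioc 0 X := by
    ext k; simp [Nat.lt_iff_add_one_le]
  rw [this]
  exact Nat.Ioc_filter_dvd_card_eq_div X (orbitLen P)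

lemma orbitLen_pos (P : PrimeOrbit σ) : 0 < orbitLen P :=
  (primeOrbit_spec P).choose_spec.2.1

lemma card_le_of_cesaro (hσ : Confined σ) {B : ℝ}
    (hB : Filter.Tendsto (fun X : ℕ => (∑ k ∈ Finset.Icc 1 X, (fixCount σ k : ℝ)) / (X : ℝ)) atTop (𝓝 B))
    (T : Finset (PrimeOrbit σ)) : (T.card : ℝ) ≤ B := by
  classical
  set g : ℕ → ℝ := fun X => (T.card : ℝ) - (∑ P ∈ T, (orbitLen P : ℝ)) / X with hg
  have hgt : Filter.Tendsto g atTop (𝓝 ((T.card : ℝ))) := by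
    have h1 := tendsto_const_div_atTop_nhds_zero_nat (∑ P ∈ T, (orbitLen P : ℝ))
    have h2 := Filter.Tendsto.sub (tendsto_const_nhds (x := (T.card : ℝ))) h1
    simpa using h2
  have hle : ∀ᶠ X : ℕ in atTop, g X ≤ (∑ k ∈ Finset.Icc 1 X, (fixCount σ k : ℝ)) / X := by
    filter_upwards [Filter.eventually_ge_atTop 1] with X hX
    have hXpos : (0:ℝ) < X := by exact_mod_cast hX
    -- nat inequality
    have hnat : ∑ P ∈ T, orbitLen P * (X / orbitLen P) ≤ ∑ k ∈ Finset.Icc 1 X, fixCount σ k := by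
      rw [← sum_sum_orbitLen T X]
      apply Finset.sum_le_sum
      intro k hk
      rw [Finset.mem_Icc] at hk
      exact sum_orbitLen_le_fixCount hσ hk.1 T
    -- real lower bound on the nat sum
    have hreal : ∑ P ∈ T, ((X:ℝ) - (orbitLen P : ℝ)) ≤ ∑ P ∈ T, ((orbitLen P * (X / orbitLen P) : ℕ) : ℝ) := by
      apply Finset.sum_le_sum
      intro P _
      have hℓ : 0 < orbitLen P := orbitLen_pos P
      have h5 := Nat.div_add_mod X (orbitLen P)
      have h6 : X % orbitLen P < orbitLen P := Nat.mod_lt _ hℓ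
      have h7 : X ≤ orbitLen P * (X / orbitLen P) + orbitLen P := by omega
      have h8 : (X:ℝ) ≤ ((orbitLen P * (X / orbitLen P) : ℕ) : ℝ) + (orbitLen P : ℝ) := by
        exact_mod_cast h7
      linarith
    have h9 : ∑ P ∈ T, ((X:ℝ) - (orbitLen P : ℝ)) = (T.card : ℝ) * X - ∑ P ∈ T, (orbitLen P : ℝ) := by
      rw [Finset.sum_sub_distrib, Finset.sum_const, nsmul_eq_mul]
    have h10 : ((∑ P ∈ T, orbitLen P * (X / orbitLen P) : ℕ) : ℝ)
        ≤ ((∑ k ∈ Finset.Icc 1 X, fixCount σ k : ℕ) : ℝ) := by exact_mod_cast hnat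
    rw [Nat.cast_sum] at h10
    have h11 : (T.card : ℝ) * X - ∑ P ∈ T, (orbitLen P : ℝ)
        ≤ ∑ k ∈ Finset.Icc 1 X, (fixCount σ k : ℝ) := by
      rw [← h9]
      refine le_trans hreal (le_trans h10 ?_)
      rw [Nat.cast_sum]
    have h12 : (T.card : ℝ) - (∑ P ∈ T, (orbitLen P : ℝ)) / X
        = ((T.card : ℝ) * X - ∑ P ∈ T, (orbitLen P : ℝ)) / X := by
      field_simp
    show (T.card : ℝ) - (∑ P ∈ T, (orbitLen P : ℝ)) / X ≤ _
    rw [h12]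
    exact div_le_div_of_nonneg_right h11 hXpos.le
  exact le_of_tendsto_of_tendsto hgt hB hle

lemma primeOrbit_finite_type (hσ : Confined σ) {B : ℝ}
    (hB : Filter.Tendsto (fun X : ℕ => (∑ k ∈ Finset.Icc 1 X, (fixCount σ k : ℝ)) / (X : ℝ)) atTop (𝓝 B)) :
    Finite (PrimeOrbit σ) := by
  by_contra h
  rw [not_finite_iff_infinite] at h
  obtain ⟨T, hT⟩ := Infinite.exists_subset_card_eq (PrimeOrbit σ) (⌈B⌉₊ + 1)
  have h1 := card_le_of_cesaro hσ hB T
  rw [hT] at h1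
  have h2 : B ≤ (⌈B⌉₊ : ℝ) := Nat.le_ceil B
  push_cast at h1
  linarith

lemma cesaro_eq_card [Fintype (PrimeOrbit σ)] (hσ : Confined σ) {B : ℝ}
    (hB : Filter.Tendsto (fun X : ℕ => (∑ k ∈ Finset.Icc 1 X, (fixCount σ k : ℝ)) / (X : ℝ)) atTop (𝓝 B)) :
    B = (Fintype.card (PrimeOrbit σ) : ℝ) := by
  classical
  have hfeq : ∀ X : ℕ, (∑ k ∈ Finset.Icc 1 X, (fixCount σ k : ℝ)) / (X : ℝ)
      = ∑ P : PrimeOrbit σ, ((orbitLen P * (X / orbitLen P) : ℕ) : ℝ) / X := by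
    intro X
    have h1 : ∑ k ∈ Finset.Icc 1 X, fixCount σ k
        = ∑ P : PrimeOrbit σ, orbitLen P * (X / orbitLen P) := by
      have h2 : ∀ k ∈ Finset.Icc 1 X, fixCount σ k
          = ∑ P ∈ Finset.univ.filter (fun P : PrimeOrbit σ => orbitLen P ∣ k), orbitLen P := by
        intro k hk
        rw [Finset.mem_Icc] at hk
        exact fixCount_eq_sum hσ hk.1
      rw [Finset.sum_congr rfl h2, sum_sum_orbitLen]
    have h3 : (∑ k ∈ Finset.Icc 1 X, (fixCount σ k : ℝ))
        = ∑ P : PrimeOrbit σ, ((orbitLen P * (X / orbitLen P) : ℕ) : ℝ) := by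
      rw [← Nat.cast_sum, h1, Nat.cast_sum]
    rw [h3, Finset.sum_div]
  have hterm : ∀ P : PrimeOrbit σ,
      Filter.Tendsto (fun X : ℕ => ((orbitLen P * (X / orbitLen P) : ℕ) : ℝ) / X) atTop (𝓝 1) := by
    intro P
    have hℓ : 0 < orbitLen P := orbitLen_pos P
    apply tendsto_of_tendsto_of_tendsto_of_le_of_le' (g := fun X : ℕ => 1 - (orbitLen P : ℝ)/X)
      (h := fun _ : ℕ => (1:ℝ))
    · have h1 := tendsto_const_div_atTop_nhds_zero_nat (orbitLen P : ℝ)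
      have h2 := Filter.Tendsto.sub (tendsto_const_nhds (x := (1:ℝ))) h1
      simpa using h2
    · exact tendsto_const_nhds
    · filter_upwards [Filter.eventually_ge_atTop 1] with X hX
      have hXpos : (0:ℝ) < X := by exact_mod_cast hX
      have h5 := Nat.div_add_mod X (orbitLen P)
      have h6 : X % orbitLen P < orbitLen P := Nat.mod_lt _ hℓ
      have h7 : X ≤ orbitLen P * (X / orbitLen P) + orbitLen P := by omega
      have h8 : (X:ℝ) - orbitLen P ≤ ((orbitLen P * (X / orbitLen P) : ℕ) : ℝ) := by
        have : (X:ℝ) ≤ ((orbitLen P * (X / orbitLen P) : ℕ) : ℝ) + (orbitLen P : ℝ) := by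
          exact_mod_cast h7
        linarith
      have h9 : ((X:ℝ) - orbitLen P)/X ≤ ((orbitLen P * (X / orbitLen P) : ℕ) : ℝ)/X :=
        div_le_div_of_nonneg_right h8 hXpos.le
      calc 1 - (orbitLen P : ℝ)/X = ((X:ℝ) - orbitLen P)/X := by field_simp
        _ ≤ _ := h9
    · filter_upwards [Filter.eventually_ge_atTop 1] with X hX
      have hXpos : (0:ℝ) < X := by exact_mod_cast hX
      have h7 : orbitLen P * (X / orbitLen P) ≤ X := by
        rw [Nat.mul_comm]
        exact Nat.div_mul_le_self X (orbitLen P)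
      have h8 : ((orbitLen P * (X / orbitLen P) : ℕ) : ℝ) ≤ (X:ℝ) := by exact_mod_cast h7
      calc ((orbitLen P * (X / orbitLen P) : ℕ) : ℝ)/X ≤ (X:ℝ)/X :=
            div_le_div_of_nonneg_right h8 hXpos.le
        _ = 1 := div_self (ne_of_gt hXpos)
  have hsum : Filter.Tendsto (fun X : ℕ => ∑ P : PrimeOrbit σ, ((orbitLen P * (X / orbitLen P) : ℕ) : ℝ) / X)
      atTop (𝓝 (∑ _P : PrimeOrbit σ, (1:ℝ))) := by
    apply tendsto_finset_sum
    intro P _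
    exact hterm P
  rw [Finset.sum_const, nsmul_eq_mul, mul_one, Finset.card_univ] at hsum
  have hfix : Filter.Tendsto (fun X : ℕ => (∑ k ∈ Finset.Icc 1 X, (fixCount σ k : ℝ)) / (X : ℝ))
      atTop (𝓝 ((Fintype.card (PrimeOrbit σ) : ℝ))) := by
    apply hsum.congr
    intro X
    rw [hfeq]
  exact tendsto_nhds_unique hB hfix

lemma Ncount_eq_card [Fintype (PrimeOrbit σ)] (X : ℕ) :
    Ncount σ X = Nat.card {m : Fin (Fintype.card (PrimeOrbit σ)) → ℕ //
      ∑ i, m i * orbitLen ((Fintype.equivFin (PrimeOrbit σ)).symm i) ≤ X} := by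
  classical
  set e := Fintype.equivFin (PrimeOrbit σ) with he
  apply Nat.card_congr
  refine Equiv.trans
    (Equiv.subtypeEquiv (Finsupp.equivFunOnFinite)
      (fun O => ?_) :
      {O : GenOrbit σ // genLen O ≤ X} ≃ {m : PrimeOrbit σ → ℕ // ∑ P, m P * orbitLen P ≤ X})
    (Equiv.subtypeEquiv (Equiv.arrowCongr e (Equiv.refl ℕ)) (fun m => ?_))
  · show genLen O ≤ X ↔ _
    have h1 : genLen O = ∑ P, O P * orbitLen P :=
      Finsupp.sum_fintype _ _ (fun P => zero_mul _)
    rw [h1]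
    rfl
  · have h2 : ∀ i, (Equiv.arrowCongr e (Equiv.refl ℕ)) m i = m (e.symm i) := by
      intro i; simp [Equiv.arrowCongr]
    have h3 : ∑ i, (Equiv.arrowCongr e (Equiv.refl ℕ)) m i * orbitLen (e.symm i)
        = ∑ P, m P * orbitLen P := by
      rw [Finset.sum_congr rfl (fun i _ => by rw [h2])]
      exact Equiv.sum_comp e.symm (fun P => m P * orbitLen P)
    rw [h3]

end OrbitCountAux
end Aux

open OrbitCountAux

/-- Proposition (N1): for a confined self-map of growth rate `Λ = 1` whose fixed-point
counts have a positive Cesàro mean `B = 𝒞(σ_k)`, one has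
`N_σ(X) = (C/Γ(B+1)) · X^B · (1 + O(1/log X))` for some constant `C > 0`. -/
theorem orbit_count_asymptotics_growth_one {𝒳 : Type*} (σ : 𝒳 → 𝒳) (hσ : Confined σ)
    (hΛ : Filter.limsup (growthSeq σ) atTop = (0 : EReal))
    (B : ℝ) (hB : CesaroLim (fun k => (fixCount σ k : ℝ)) B) (hBpos : 0 < B) :
    ∃ C : ℝ, 0 < C ∧ ∃ E : ℕ → ℝ,
      (E =O[atTop] fun X : ℕ => 1 / Real.log (X : ℝ)) ∧
      ∀ᶠ X : ℕ in atTop,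
        (Ncount σ X : ℝ) = C / Real.Gamma (B + 1) * (X : ℝ) ^ B * (1 + E X) := by
  classical
  have hB' : Filter.Tendsto
      (fun X : ℕ => (∑ k ∈ Finset.Icc 1 X, (fixCount σ k : ℝ)) / (X : ℝ)) atTop (𝓝 B) := hB
  haveI hfin : Finite (PrimeOrbit σ) := primeOrbit_finite_type hσ hB'
  haveI : Fintype (PrimeOrbit σ) := Fintype.ofFinite _
  set r := Fintype.card (PrimeOrbit σ) with hr
  have hBr : B = (r : ℝ) := cesaro_eq_card hσ hB'
  have hrpos : 0 < r := by
    by_contra h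
    have h0 : r = 0 := by omega
    rw [h0] at hBr
    simp at hBr
    rw [hBr] at hBpos
    exact lt_irrefl 0 hBpos
  obtain ⟨n, hn⟩ : ∃ n, r = n + 1 := ⟨r - 1, by omega⟩
  set e := Fintype.equivFin (PrimeOrbit σ) with he
  set w : Fin r → ℕ := fun i => orbitLen (e.symm i) with hw
  have hw1 : ∀ i, 1 ≤ w i := fun i => orbitLen_pos _
  set Wr : ℝ := ∏ i, (w i : ℝ) with hWr
  set Sr : ℝ := ∑ i, (w i : ℝ) with hSr
  have hWpos : 0 < Wr := by
    rw [hWr]; apply Finset.prod_pos; intro i _; exact_mod_cast hw1 i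
  have hSpos : 0 ≤ Sr := by
    rw [hSr]; apply Finset.sum_nonneg; intro i _; positivity
  have hNc : ∀ X : ℕ, Ncount σ X = Nat.card {m : Fin r → ℕ // ∑ i, m i * w i ≤ X} :=
    fun X => Ncount_eq_card X
  have hbnd : ∀ X : ℕ,
      (X:ℝ)^r ≤ (Ncount σ X : ℝ) * (Nat.factorial r : ℝ) * Wr ∧
      (Ncount σ X : ℝ) * (Nat.factorial r : ℝ) * Wr ≤ ((X:ℝ) + Sr)^r := by
    intro X
    have := count_bounds r w hw1 X
    rw [← hNc X] at this
    exact this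
  have hGamma : Real.Gamma (B+1) = (Nat.factorial r : ℝ) := by
    rw [hBr]; exact Real.Gamma_nat_eq_factorial r
  have hfactpos : (0:ℝ) < (Nat.factorial r : ℝ) := by
    exact_mod_cast Nat.factorial_pos r
  have hXpow : ∀ X : ℕ, (X:ℝ) ^ B = (X:ℝ)^(r:ℕ) := by
    intro X
    rw [hBr, Real.rpow_natCast]
  refine ⟨Wr⁻¹, inv_pos.mpr hWpos, ?_⟩
  set E : ℕ → ℝ := fun X =>
    (Ncount σ X : ℝ) * (Nat.factorial r : ℝ) * Wr / (X:ℝ)^(r:ℕ) - 1 with hE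
  have hEbound : ∀ X : ℕ, (3:ℝ) ≤ X → Sr ≤ X →
      0 ≤ E X ∧ E X ≤ ((n:ℝ)+1) * 2^n * Sr / X := by
    intro X h3 hSX
    have hXpos : (0:ℝ) < X := by linarith
    have hXp : (0:ℝ) < (X:ℝ)^(r:ℕ) := pow_pos hXpos r
    obtain ⟨hlo, hhi⟩ := hbnd X
    constructor
    · rw [hE]
      have h1 : (1:ℝ) ≤ (Ncount σ X : ℝ) * (Nat.factorial r : ℝ) * Wr / (X:ℝ)^(r:ℕ) :=
        (one_le_div hXp).mpr hlo
      linarith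
    · rw [hE]
      have h2 : E X + 1 ≤ ((X:ℝ) + Sr)^r / (X:ℝ)^(r:ℕ) := by
        rw [hE]
        have := div_le_div_of_nonneg_right hhi hXp.le
        linarith [this]
      have h3' : ((X:ℝ) + Sr)^r - (X:ℝ)^(r:ℕ)
          ≤ ((n:ℝ)+1) * ((X:ℝ) + Sr)^n * Sr := by
        have hgen := pow_sub_pow_le (X:ℝ) ((X:ℝ) + Sr) hXpos.le (by linarith) n
        have hsr : (X:ℝ) + Sr - X = Sr := by ring
        rw [hsr] at hgen
        rw [hn]
        exact_mod_cast hgen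
      have h4 : ((X:ℝ) + Sr)^n ≤ 2^n * (X:ℝ)^n := by
        calc ((X:ℝ) + Sr)^n ≤ ((X:ℝ) + X)^n := by
              apply pow_le_pow_left₀ (by linarith) (by linarith)
          _ = 2^n * (X:ℝ)^n := by ring
      have h5 : ((X:ℝ) + Sr)^r - (X:ℝ)^(r:ℕ)
          ≤ ((n:ℝ)+1) * 2^n * Sr * (X:ℝ)^n := by
        calc ((X:ℝ) + Sr)^r - (X:ℝ)^(r:ℕ)
            ≤ ((n:ℝ)+1) * ((X:ℝ) + Sr)^n * Sr := h3'
          _ ≤ ((n:ℝ)+1) * (2^n * (X:ℝ)^n) * Sr := by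
              apply mul_le_mul_of_nonneg_right _ hSpos
              apply mul_le_mul_of_nonneg_left h4 (by positivity)
          _ = ((n:ℝ)+1) * 2^n * Sr * (X:ℝ)^n := by ring
      have h6 : (Ncount σ X : ℝ) * (Nat.factorial r : ℝ) * Wr / (X:ℝ)^(r:ℕ) - 1
          ≤ (((X:ℝ) + Sr)^r - (X:ℝ)^(r:ℕ)) / (X:ℝ)^(r:ℕ) := by
        rw [sub_div, div_self (ne_of_gt hXp)]
        have := div_le_div_of_nonneg_right hhi hXp.le
        linarith
      have h7 : (((X:ℝ) + Sr)^r - (X:ℝ)^(r:ℕ)) / (X:ℝ)^(r:ℕ)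
          ≤ ((n:ℝ)+1) * 2^n * Sr / X := by
        rw [hn]
        have hXn : (0:ℝ) < (X:ℝ)^(n:ℕ) := pow_pos hXpos n
        have heq : (X:ℝ)^(n+1:ℕ) = (X:ℝ)^n * X := by rw [pow_succ]
        calc (((X:ℝ) + Sr)^(n+1) - (X:ℝ)^(n+1:ℕ)) / (X:ℝ)^(n+1:ℕ)
            ≤ (((n:ℝ)+1) * 2^n * Sr * (X:ℝ)^n) / (X:ℝ)^(n+1:ℕ) := by
              apply div_le_div_of_nonneg_right _ (pow_pos hXpos (n+1)).le
              rw [← hn]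
              exact h5
          _ = ((n:ℝ)+1) * 2^n * Sr / X := by
              rw [heq]
              field_simp
      exact le_trans h6 h7
  refine ⟨E, ?_, ?_⟩
  · -- big-O estimate
    rw [Asymptotics.isBigO_iff]
    refine ⟨((n:ℝ)+1) * 2^n * Sr, ?_⟩
    have hev : ∀ᶠ X : ℕ in atTop, (3:ℝ) ≤ X ∧ Sr ≤ X := by
      have h1 : ∀ᶠ X : ℕ in atTop, (3:ℕ) ≤ X := Filter.eventually_ge_atTop 3
      have h2 : ∀ᶠ X : ℕ in atTop, (⌈Sr⌉₊ : ℕ) ≤ X := Filter.eventually_ge_atTop _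
      filter_upwards [h1, h2] with X hX1 hX2
      constructor
      · exact_mod_cast hX1
      · calc Sr ≤ (⌈Sr⌉₊ : ℝ) := Nat.le_ceil Sr
          _ ≤ X := by exact_mod_cast hX2
    filter_upwards [hev] with X hX
    obtain ⟨h3, hSX⟩ := hX
    obtain ⟨hE0, hEK⟩ := hEbound X h3 hSX
    have hXpos : (0:ℝ) < X := by linarith
    have hlogpos : 0 < Real.log X := Real.log_pos (by linarith)
    have hlogle : Real.log X ≤ X := by
      have := Real.log_le_sub_one_of_pos hXpos
      linarith
    have hK : (0:ℝ) ≤ ((n:ℝ)+1) * 2^n * Sr := by positivity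
    rw [Real.norm_eq_abs, abs_of_nonneg hE0, Real.norm_eq_abs]
    have habs : |1 / Real.log (X:ℝ)| = 1 / Real.log X := by
      rw [abs_of_pos (by positivity)]
    rw [habs]
    calc E X ≤ ((n:ℝ)+1) * 2^n * Sr / X := hEK
      _ ≤ ((n:ℝ)+1) * 2^n * Sr / Real.log X := by
          apply div_le_div_of_nonneg_left hK hlogpos hlogle
      _ = (((n:ℝ)+1) * 2^n * Sr) * (1 / Real.log X) := by ring
  · -- eventual exact formula
    filter_upwards [Filter.eventually_ge_atTop 1] with X hX
    have hXpos : (0:ℝ) < X := by exact_mod_cast hX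
    have hXp : (0:ℝ) < (X:ℝ)^(r:ℕ) := pow_pos hXpos r
    rw [hXpow X, hGamma, hE]
    field_simp
    ring
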